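/- Let I be a monomial ideal of S of Borel type and let k ≥ 1 be an integer. Then the k-th symbolic power I^(k) is a monomial ideal of Borel type. -/

import Mathlib

open MvPolynomial

/-- An ideal of `K[x_1, …, x_n]` is a monomial ideal if it is generated by monomials. -/
def IsMonomialIdeal {K : Type*} [Field K] {n : ℕ} (I : Ideal (MvPolynomial (Fin n) K)) : Prop :=
  ∃ G : Set (Fin n →₀ ℕ),
    I = Ideal.span ((fun a => (monomial a (1 : K) : MvPolynomial (Fin n) K)) '' G)

/-- A monomial ideal `I` is of Borel type if for every monomial `u ∈ I` and all
`i < j`, `s ≥ 1` with `x_j ^ s ∣ u`, there is `t ≥ 0` with `x_i ^ t * (u / x_j ^ s) ∈ I`. -/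
def IsBorelType {K : Type*} [Field K] {n : ℕ} (I : Ideal (MvPolynomial (Fin n) K)) : Prop :=
  ∀ a : Fin n →₀ ℕ, (monomial a (1 : K) : MvPolynomial (Fin n) K) ∈ I →
    ∀ i j : Fin n, i < j → ∀ s : ℕ, 1 ≤ s → s ≤ a j →
      ∃ t : ℕ,
        (monomial (a - Finsupp.single j s + Finsupp.single i t) (1 : K) :
          MvPolynomial (Fin n) K) ∈ I

/-- The kernel of `R → (R/I)_P`: the ideal `{r : r * s ∈ I for some s ∉ P}`. -/
def kerLoc {R : Type*} [CommRing R] (I P : Ideal R) (hP : P.IsPrime) : Ideal R where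
  carrier := {r : R | ∃ s, s ∉ P ∧ r * s ∈ I}
  add_mem' := by
    rintro a b ⟨s, hs, has⟩ ⟨t, ht, hbt⟩
    refine ⟨s * t, fun h => (hP.mem_or_mem h).elim hs ht, ?_⟩
    have h : (a + b) * (s * t) = (a * s) * t + (b * t) * s := by ring
    rw [h]
    exact Ideal.add_mem _ (Ideal.mul_mem_right _ _ has) (Ideal.mul_mem_right _ _ hbt)
  zero_mem' := ⟨1, fun h => hP.ne_top ((Ideal.eq_top_iff_one P).mpr h), by simp⟩
  smul_mem' := by
    rintro c a ⟨s, hs, has⟩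
    exact ⟨s, hs, by rw [smul_eq_mul, mul_assoc]; exact Ideal.mul_mem_left _ _ has⟩

/-- The `k`-th symbolic power of an ideal `I`:
`I^(k) = ⋂_{P ∈ Min(I)} ker (R → (R/I^k)_P)`. -/
def symbolicPower {R : Type*} [CommRing R] (I : Ideal R) (k : ℕ) : Ideal R :=
  ⨅ P : I.minimalPrimes, kerLoc (I ^ k) P.1 P.2.1.1


namespace SPB

variable {K : Type*} [Field K] {n : ℕ}

variable {K : Type*} [Field K] {n : ℕ}

/-- monomial span -/
noncomputable def msp (K : Type*) [Field K] {n : ℕ} (G : Set (Fin n →₀ ℕ)) : Ideal (MvPolynomial (Fin n) K) :=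
  Ideal.span ((fun a => (monomial a (1 : K) : MvPolynomial (Fin n) K)) '' G)

lemma mem_msp {G : Set (Fin n →₀ ℕ)} {p : MvPolynomial (Fin n) K} :
    p ∈ msp K G ↔ ∀ a ∈ p.support, ∃ g ∈ G, g ≤ a :=
  MvPolynomial.mem_ideal_span_monomial_image

lemma mono_mem_msp {G : Set (Fin n →₀ ℕ)} {a : Fin n →₀ ℕ} :
    (monomial a (1:K)) ∈ msp K G ↔ ∃ g ∈ G, g ≤ a := by
  rw [mem_msp]
  constructor
  · intro h
    exact h a (by simp [MvPolynomial.support_monomial])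
  · intro h b hb
    rw [MvPolynomial.mem_support_iff, MvPolynomial.coeff_monomial] at hb
    rcases eq_or_ne a b with rfl | hne
    · exact h
    · simp [hne] at hb

/-- small part of an exponent -/
noncomputable def sm (m : ℕ) (a : Fin n →₀ ℕ) : Fin n →₀ ℕ :=
  a.filter (fun i => (i : ℕ) < m)

lemma sm_apply (m : ℕ) (a : Fin n →₀ ℕ) (i : Fin n) :
    sm m a i = if (i : ℕ) < m then a i else 0 := by
  simp [sm, Finsupp.filter_apply]

lemma sm_add (m : ℕ) (a b : Fin n →₀ ℕ) : sm m (a + b) = sm m a + sm m b :=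
  Finsupp.filter_add

lemma sm_le (m : ℕ) (a : Fin n →₀ ℕ) : sm m a ≤ a := by
  intro i; rw [sm_apply]; split <;> simp

lemma sm_big (m : ℕ) (a : Fin n →₀ ℕ) (i : Fin n) (h : m ≤ (i : ℕ)) : sm m a i = 0 := by
  rw [sm_apply, if_neg (by omega)]

lemma le_sm_iff {m : ℕ} {g a : Fin n →₀ ℕ} (hg : ∀ i : Fin n, m ≤ (i : ℕ) → g i = 0) :
    g ≤ a ↔ g ≤ sm m a := by
  constructor <;> intro h i <;> have := h i <;> rw [sm_apply] at * <;>
    rcases lt_or_ge ((i : ℕ)) m with hc | hc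
  · rwa [if_pos hc]
  · rw [hg i hc]; exact Nat.zero_le _
  · rwa [if_pos hc] at this
  · rw [hg i hc]; exact Nat.zero_le _

/-- the prime generated by the first m variables -/
noncomputable def Pm (K : Type*) [Field K] (n m : ℕ) : Ideal (MvPolynomial (Fin n) K) :=
  msp K {a | ∃ i : Fin n, (i : ℕ) < m ∧ a = Finsupp.single i 1}

lemma mem_Pm {m : ℕ} {p : MvPolynomial (Fin n) K} :
    p ∈ Pm K n m ↔ ∀ a ∈ p.support, ∃ i : Fin n, (i : ℕ) < m ∧ a i ≠ 0 := by
  rw [Pm, mem_msp]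
  refine forall₂_congr fun a _ => ?_
  constructor
  · rintro ⟨g, ⟨i, him, rfl⟩, hle⟩
    exact ⟨i, him, by have := hle i; simp [Finsupp.single_apply] at this; omega⟩
  · rintro ⟨i, him, hai⟩
    exact ⟨Finsupp.single i 1, ⟨i, him, rfl⟩, Finsupp.single_le_iff.mpr (by omega)⟩

lemma not_mem_Pm {m : ℕ} {p : MvPolynomial (Fin n) K} :
    p ∉ Pm K n m ↔ ∃ a ∈ p.support, ∀ i : Fin n, (i : ℕ) < m → a i = 0 := by
  rw [mem_Pm]; push_neg; simp

/-- Core lemma: a monomial ideal generated in the small variables is `Pm`-saturated. -/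
lemma sat_core {m : ℕ} {G : Set (Fin n →₀ ℕ)} (hG : ∀ g ∈ G, ∀ i : Fin n, m ≤ (i : ℕ) → g i = 0)
    {r s : MvPolynomial (Fin n) K}
    (hr : r ∉ msp K G) (hs : s ∉ Pm K n m) : r * s ∉ msp K G := by
  classical
  -- bad exponents of r
  have hA : ∃ a ∈ r.support, ¬ ∃ g ∈ G, g ≤ a := by
    by_contra hc; push_neg at hc
    exact hr (mem_msp.mpr (fun a ha => hc a ha))
  set A : Finset (Fin n →₀ ℕ) := r.support.filter (fun a => ¬ ∃ g ∈ G, g ≤ a) with hAdef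
  have hAne : A.Nonempty := by
    obtain ⟨a, ha, hba⟩ := hA
    exact ⟨a, Finset.mem_filter.mpr ⟨ha, hba⟩⟩
  obtain ⟨b0, hb0s, hb0⟩ := not_mem_Pm.mp hs
  set B : Finset (Fin n →₀ ℕ) :=
    s.support.filter (fun b => ∀ i : Fin n, (i : ℕ) < m → b i = 0) with hBdef
  have hBne : B.Nonempty := ⟨b0, Finset.mem_filter.mpr ⟨hb0s, hb0⟩⟩
  -- pick extreme elements
  obtain ⟨a, haA, hamin⟩ := Finset.exists_min_image A
    (fun a => toLex ((toLex (sm m a), toLex a) : Lex (Fin n →₀ ℕ) × Lex (Fin n →₀ ℕ))) hAne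
  obtain ⟨b, hbB, hbmin⟩ := Finset.exists_min_image B (fun b => toLex b) hBne
  have haR : a ∈ r.support := (Finset.mem_filter.mp haA).1
  have haBad : ¬ ∃ g ∈ G, g ≤ a := (Finset.mem_filter.mp haA).2
  have hbS : b ∈ s.support := (Finset.mem_filter.mp hbB).1
  have hbSm : sm m b = 0 := by
    ext i; rw [sm_apply]
    split
    · exact (Finset.mem_filter.mp hbB).2 i ‹_›
    · rfl
  -- the extreme coefficient of the product
  have hcoeff : (r * s).coeff (a + b) = r.coeff a * s.coeff b := by
    rw [MvPolynomial.coeff_mul]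
    apply Finset.sum_eq_single_of_mem (a, b) (Finset.HasAntidiagonal.mem_antidiagonal.mpr rfl)
    rintro ⟨x, y⟩ hxy hne
    have hsum : x + y = a + b := Finset.HasAntidiagonal.mem_antidiagonal.mp hxy
    by_contra hzero
    have hx : x ∈ r.support := by
      rw [MvPolynomial.mem_support_iff]; intro h; exact hzero (by simp [h])
    have hy : y ∈ s.support := by
      rw [MvPolynomial.mem_support_iff]; intro h; exact hzero (by simp [h])
    have hsm : sm m x + sm m y = sm m a := by
      rw [← sm_add, hsum, sm_add, hbSm, add_zero]
    by_cases hys : sm m y = 0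
    · -- y also avoids small variables
      have hsx : sm m x = sm m a := by rw [hys, add_zero] at hsm; exact hsm
      have hxBad : ¬ ∃ g ∈ G, g ≤ x := by
        rintro ⟨g, hgG, hgx⟩
        refine haBad ⟨g, hgG, ?_⟩
        rw [le_sm_iff (hG g hgG)] at hgx ⊢
        rwa [hsx] at hgx
      have hxA : x ∈ A := Finset.mem_filter.mpr ⟨hx, hxBad⟩
      have hyB : y ∈ B := by
        refine Finset.mem_filter.mpr ⟨hy, fun i hi => ?_⟩
        have := DFunLike.congr_fun hys i
        simpa [sm_apply, hi] using this
      have h1 := hamin x hxA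
      rw [Prod.Lex.le_iff] at h1
      have h1' : toLex a ≤ toLex x := by
        rcases h1 with h | ⟨_, h⟩
        · exact absurd (congrArg toLex hsx) (by simpa using (ne_of_lt h).symm)
        · exact h
      have h2' : toLex b ≤ toLex y := hbmin y hyB
      have heq : toLex a + toLex b = toLex x + toLex y := congrArg toLex hsum.symm
      have hax : toLex a = toLex x := by
        by_contra hne2
        exact absurd heq (ne_of_lt (add_lt_add_of_lt_of_le (lt_of_le_of_ne h1' hne2) h2'))
      have hx' : x = a := by exact_mod_cast hax.symm
      have hy' : y = b := by
        rw [hx'] at hsum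
        exact add_left_cancel hsum
      exact hne (by rw [hx', hy'])
    · -- y involves a small variable: contradiction with minimality of first key
      have hxle : sm m x ≤ sm m a := by intro i; rw [← hsm]; simp
      have hxne : sm m x ≠ sm m a := by
        intro heq; apply hys
        have h0 : sm m x + sm m y = sm m x + 0 := by
          rw [add_zero]; exact hsm.trans heq.symm
        exact add_left_cancel h0
      have hxBad : ¬ ∃ g ∈ G, g ≤ x := by
        rintro ⟨g, hgG, hgx⟩
        refine haBad ⟨g, hgG, ?_⟩
        calc g ≤ sm m x := (le_sm_iff (hG g hgG)).mp hgx
          _ ≤ sm m a := hxle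
          _ ≤ a := sm_le m a
      have hxA : x ∈ A := Finset.mem_filter.mpr ⟨hx, hxBad⟩
      have h1 := hamin x hxA
      rw [Prod.Lex.le_iff] at h1
      have hlt : toLex (sm m x) < toLex (sm m a) :=
        lt_of_le_of_ne (Finsupp.toLex_monotone hxle) (fun hc => hxne (by exact_mod_cast hc))
      rcases h1 with h | ⟨h, _⟩
      · exact absurd hlt (not_lt_of_gt h)
      · have h' : toLex (sm m a) = toLex (sm m x) := h
        rw [h'] at hlt; exact lt_irrefl _ hlt
  -- now a + b is a bad exponent in the support of r * s
  intro hmem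
  have hab : (a + b) ∈ (r * s).support := by
    rw [MvPolynomial.mem_support_iff, hcoeff]
    exact mul_ne_zero (MvPolynomial.mem_support_iff.mp haR) (MvPolynomial.mem_support_iff.mp hbS)
  obtain ⟨g, hgG, hgle⟩ := mem_msp.mp hmem (a + b) hab
  refine haBad ⟨g, hgG, ?_⟩
  calc g ≤ sm m (a + b) := (le_sm_iff (hG g hgG)).mp hgle
    _ = sm m a := by rw [sm_add, hbSm, add_zero]
    _ ≤ a := sm_le m a



-- ===== products and powers =====

def sums (A B : Set (Fin n →₀ ℕ)) : Set (Fin n →₀ ℕ) := {c | ∃ a ∈ A, ∃ b ∈ B, c = a + b}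

lemma mono_mem_msp' {G : Set (Fin n →₀ ℕ)} {a : Fin n →₀ ℕ} (h : a ∈ G) :
    (monomial a (1:K)) ∈ msp K G :=
  Ideal.subset_span ⟨a, h, rfl⟩

/-- sumset of two generator sets -/
lemma msp_mul (A B : Set (Fin n →₀ ℕ)) :
    msp K A * msp K B = msp K (sums A B) := by
  classical
  apply le_antisymm
  · rw [Ideal.mul_le]
    intro p hp q hq
    rw [mem_msp]
    intro c hc
    have hsupp := MvPolynomial.support_mul p q hc
    rw [Finset.mem_add] at hsupp
    obtain ⟨u, hu, v, hv, rfl⟩ := hsupp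
    obtain ⟨g, hg, hgu⟩ := mem_msp.mp hp u hu
    obtain ⟨h, hh, hhv⟩ := mem_msp.mp hq v hv
    exact ⟨g + h, ⟨g, hg, h, hh, rfl⟩, add_le_add hgu hhv⟩
  · rw [msp, Ideal.span_le]
    rintro _ ⟨c, ⟨a, ha, b, hb, rfl⟩, rfl⟩
    have : (monomial (a + b) (1:K)) = monomial a 1 * monomial b 1 := by
      rw [MvPolynomial.monomial_mul, one_mul]
    show (monomial (a + b) (1:K)) ∈ msp K A * msp K B
    rw [this]
    exact Ideal.mul_mem_mul (mono_mem_msp' ha) (mono_mem_msp' hb)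

def kSum (G : Set (Fin n →₀ ℕ)) : ℕ → Set (Fin n →₀ ℕ)
  | 0 => {0}
  | k + 1 => sums (kSum G k) G

lemma msp_pow (G : Set (Fin n →₀ ℕ)) (k : ℕ) :
    (msp K G) ^ k = msp K (kSum G k) := by
  induction k with
  | zero =>
    rw [pow_zero, kSum]
    have : ((fun a => (monomial a (1 : K) : MvPolynomial (Fin n) K)) '' {0}) = {1} := by
      rw [Set.image_singleton]
      simp
    rw [msp, this, Ideal.span_singleton_one, Ideal.one_eq_top]
  | succ k ih =>
    rw [pow_succ, ih, msp_mul, kSum]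


-- ===== Borel machinery =====

/-- Borel exchange condition at the level of exponent sets. -/
def BorelG (G : Set (Fin n →₀ ℕ)) : Prop :=
  ∀ a : Fin n →₀ ℕ, (∃ g ∈ G, g ≤ a) → ∀ i j : Fin n, i < j → ∀ s : ℕ, 1 ≤ s → s ≤ a j →
    ∃ t, ∃ g ∈ G, g ≤ a - Finsupp.single j s + Finsupp.single i t

lemma BorelG.move {G : Set (Fin n →₀ ℕ)} (hG : BorelG G) (a : Fin n →₀ ℕ)
    (ha : ∃ g ∈ G, g ≤ a) (i j : Fin n) (hij : i < j) (s : ℕ) (hs : s ≤ a j) :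
    ∃ t, ∃ g ∈ G, g ≤ a - Finsupp.single j s + Finsupp.single i t := by
  rcases Nat.eq_zero_or_pos s with rfl | hpos
  · refine ⟨0, ?_⟩; simpa using ha
  · exact hG a ha i j hij s hpos hs

lemma BorelG_sums {A B : Set (Fin n →₀ ℕ)} (hA : BorelG A) (hB : BorelG B) :
    BorelG (sums A B) := by
  rintro a ⟨g, ⟨g1, hg1, g2, hg2, rfl⟩, hga⟩ i j hij s hs1 hsaj
  have hg12 : g1 j + g2 j ≤ a j := by
    have := hga j; simpa using this
  set s1 := min s (g1 j) with hs1def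
  set s2 := min (s - s1) (g2 j) with hs2def
  have hc1 : s1 ≤ g1 j := min_le_right _ _
  have hc2 : s2 ≤ g2 j := min_le_right _ _
  have hc1' : s1 ≤ s := min_le_left _ _
  have hc2' : s2 ≤ s - s1 := min_le_left _ _
  have hkey : s - s1 - s2 + (g1 j + g2 j) ≤ a j := by
    rcases min_choice s (g1 j) with h | h <;> rcases min_choice (s - s1) (g2 j) with h' | h' <;>
      omega
  obtain ⟨t1, h1, hh1A, hle1⟩ := hA.move g1 ⟨g1, hg1, le_refl _⟩ i j hij s1 hc1
  obtain ⟨t2, h2, hh2B, hle2⟩ := hB.move g2 ⟨g2, hg2, le_refl _⟩ i j hij s2 hc2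
  refine ⟨t1 + t2, h1 + h2, ⟨h1, hh1A, h2, hh2B, rfl⟩, ?_⟩
  intro l
  have e1 := hle1 l
  have e2 := hle2 l
  have e3 := hga l
  have hij' : ¬ (i = j) := ne_of_lt hij
  simp only [Finsupp.add_apply, Finsupp.tsub_apply, Finsupp.single_apply,
    Finsupp.coe_add, Pi.add_apply, Finsupp.coe_tsub, Pi.sub_apply] at e1 e2 e3 ⊢
  rcases eq_or_ne j l with rfl | hjl
  · have hi : ¬ (i = j) := hij'
    rw [if_pos rfl] at e1 e2 ⊢
    rw [if_neg hi] at e1 e2 ⊢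
    omega
  · rw [if_neg hjl] at e1 e2 ⊢
    rcases eq_or_ne i l with rfl | hil
    · rw [if_pos rfl] at e1 e2 ⊢
      omega
    · rw [if_neg hil] at e1 e2 ⊢
      omega

lemma BorelG_kSum {G : Set (Fin n →₀ ℕ)} (hG : BorelG G) (k : ℕ) : BorelG (kSum G k) := by
  induction k with
  | zero =>
    rintro a ⟨g, hg, hga⟩ i j hij s hs1 hsaj
    exact ⟨0, 0, rfl, by intro l; simp⟩
  | succ k ih => exact BorelG_sums ih hG

lemma le_single_of_zeros {a : Fin n →₀ ℕ} (i : Fin n)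
    (hlow : ∀ l, l < i → a l = 0) (hhigh : ∀ l, i < l → a l = 0) :
    a ≤ Finsupp.single i (a i) := by
  intro u
  rcases lt_trichotomy u i with h | rfl | h
  · rw [hlow u h]; exact Nat.zero_le _
  · simp
  · rw [hhigh u h]; exact Nat.zero_le _

lemma pushdown_aux {G : Set (Fin n →₀ ℕ)} (hG : BorelG G) (i : Fin n) :
    ∀ N (a : Fin n →₀ ℕ), (∑ l : Fin n, if i < l then a l else 0) ≤ N →
      (∃ g ∈ G, g ≤ a) → (∀ l : Fin n, l < i → a l = 0) →
      ∃ t, ∃ g ∈ G, g ≤ Finsupp.single i t := by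
  intro N
  induction N with
  | zero =>
    intro a hsum ha hlow
    obtain ⟨g, hg, hga⟩ := ha
    have hz := Finset.sum_eq_zero_iff.mp (Nat.le_zero.mp hsum)
    have hhigh : ∀ l, i < l → a l = 0 := by
      intro l hl
      have := hz l (Finset.mem_univ l)
      rwa [if_pos hl] at this
    exact ⟨a i, g, hg, le_trans hga (le_single_of_zeros i hlow hhigh)⟩
  | succ N ihN =>
    intro a hsum ha hlow
    by_cases hz : ∀ l : Fin n, i < l → a l = 0
    · obtain ⟨g, hg, hga⟩ := ha
      exact ⟨a i, g, hg, le_trans hga (le_single_of_zeros i hlow hz)⟩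
    · push_neg at hz
      obtain ⟨l, hil, hal⟩ := hz
      obtain ⟨t', g', hg', hle⟩ := hG a ha i l hil (a l) (by omega) (le_refl _)
      set a' := a - Finsupp.single l (a l) + Finsupp.single i t' with ha'def
      have hil' : ¬ (i = l) := ne_of_lt hil
      have ha'app : ∀ u : Fin n, a' u =
          a u - (if l = u then a l else 0) + (if i = u then t' else 0) := by
        intro u
        simp [ha'def, Finsupp.add_apply, Finsupp.tsub_apply, Finsupp.single_apply]
      apply ihN a' ?_ ⟨g', hg', hle⟩ ?_
      · have hlt : (∑ u : Fin n, if i < u then a' u else 0) <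
            (∑ u : Fin n, if i < u then a u else 0) := by
          apply Finset.sum_lt_sum
          · intro u _
            by_cases hu : i < u
            · have hiu : ¬ (i = u) := ne_of_lt hu
              rw [if_pos hu, if_pos hu, ha'app u]
              rcases eq_or_ne l u with rfl | hlu
              · rw [if_pos rfl, if_neg hiu]; omega
              · rw [if_neg hlu, if_neg hiu]; omega
            · rw [if_neg hu, if_neg hu]
          · refine ⟨l, Finset.mem_univ l, ?_⟩
            rw [if_pos hil, if_pos hil, ha'app l, if_pos rfl, if_neg hil']
            omega
        omega
      · intro u hu
        have hiu : ¬ (i = u) := fun h => absurd (h ▸ hu) (lt_irrefl _)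
        have hlu : ¬ (l = u) := fun h => absurd (h ▸ (hu.trans hil)) (lt_irrefl _)
        rw [ha'app u, if_neg hlu, if_neg hiu, hlow u hu]


-- ===== Pm is prime =====

lemma Pm_gens_small (m : ℕ) :
    ∀ g ∈ {a : Fin n →₀ ℕ | ∃ i : Fin n, (i : ℕ) < m ∧ a = Finsupp.single i 1},
      ∀ i : Fin n, m ≤ (i : ℕ) → g i = 0 := by
  rintro g ⟨i, him, rfl⟩ u hu
  rw [Finsupp.single_apply]
  split
  · next h => subst h; omega
  · rfl

lemma one_mem_support_one : (0 : Fin n →₀ ℕ) ∈ (1 : MvPolynomial (Fin n) K).support := by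
  rw [MvPolynomial.mem_support_iff]
  simp

lemma Pm_prime (m : ℕ) : (Pm K n m).IsPrime := by
  constructor
  · intro htop
    have h1 : (1 : MvPolynomial (Fin n) K) ∈ Pm K n m := htop ▸ Submodule.mem_top
    obtain ⟨i, _, hi⟩ := mem_Pm.mp h1 0 one_mem_support_one
    exact hi rfl
  · intro p q hpq
    by_contra hcon
    push_neg at hcon
    exact absurd hpq (sat_core (Pm_gens_small m) hcon.1 hcon.2)

-- ===== Borel type transfer =====

lemma isBorelType_msp {G : Set (Fin n →₀ ℕ)} : IsBorelType (msp K G) ↔ BorelG G := by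
  constructor
  · intro h a ha i j hij s hs1 hs2
    obtain ⟨t, ht⟩ := h a (mono_mem_msp.mpr ha) i j hij s hs1 hs2
    exact ⟨t, mono_mem_msp.mp ht⟩
  · intro h a ha i j hij s hs1 hs2
    obtain ⟨t, g, hg, hle⟩ := h a (mono_mem_msp.mp ha) i j hij s hs1 hs2
    exact ⟨t, mono_mem_msp.mpr ⟨g, hg, hle⟩⟩

-- ===== choice of m =====

lemma msp_le_Pm_top {G : Set (Fin n →₀ ℕ)} (hne : (1 : MvPolynomial (Fin n) K) ∉ msp K G) :
    msp K G ≤ Pm K n n := by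
  intro p hp
  rw [mem_Pm]
  intro a ha
  obtain ⟨g, hg, hga⟩ := mem_msp.mp hp a ha
  by_cases h0 : a = 0
  · exfalso
    apply hne
    have hg0 : g ≤ 0 := h0 ▸ hga
    have : (monomial (0 : Fin n →₀ ℕ) (1 : K)) ∈ msp K G := mono_mem_msp.mpr ⟨g, hg, hg0⟩
    simpa using this
  · obtain ⟨i, hi⟩ := Finsupp.ne_iff.mp h0
    exact ⟨i, i.isLt, hi⟩

lemma msp_zero : msp K ({0} : Set (Fin n →₀ ℕ)) = ⊤ := by
  have h : ((fun a => (monomial a (1 : K) : MvPolynomial (Fin n) K)) '' {0}) = {1} := by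
    rw [Set.image_singleton]
    simp
  rw [msp, h, Ideal.span_singleton_one]

lemma mem_kerLoc {R : Type*} [CommRing R] {I P : Ideal R} {hP : P.IsPrime} {r : R} :
    r ∈ kerLoc I P hP ↔ ∃ s, s ∉ P ∧ r * s ∈ I := Iff.rfl



-- ===== the small-part ideal is Borel =====

lemma BorelG_sm {m : ℕ} {H : Set (Fin n →₀ ℕ)} (hBk : BorelG H) :
    BorelG ((sm (n := n) m) '' H) := by
  rintro a ⟨_, ⟨g, hgk, rfl⟩, hga⟩ i j hij s hs1 hsaj
  by_cases hjm : (j : ℕ) < m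
  · -- j is a small variable
    set c := a + (g - sm m g) with hc
    have hgc : g ≤ c := by
      intro u
      rw [hc]
      rcases lt_or_ge ((u : ℕ)) m with hu | hu
      · have h1 := hga u
        simp only [Finsupp.add_apply, Finsupp.tsub_apply, sm_apply, if_pos hu] at h1 ⊢
        omega
      · simp only [Finsupp.add_apply, Finsupp.tsub_apply, sm_apply, if_neg (not_lt.mpr hu)]
        omega
    have hcj : s ≤ c j := by
      rw [hc]
      simp only [Finsupp.add_apply, Finsupp.tsub_apply, sm_apply, if_pos hjm]
      omega
    obtain ⟨t, h, hh, hle⟩ := hBk c ⟨g, hgk, hgc⟩ i j hij s hs1 hcj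
    refine ⟨t, sm m h, ⟨h, hh, rfl⟩, ?_⟩
    intro u
    have h2 := hle u
    have h3 := hga u
    simp only [Finsupp.add_apply, Finsupp.tsub_apply, Finsupp.single_apply, sm_apply,
      hc] at h2 h3 ⊢
    rcases lt_or_ge ((u : ℕ)) m with hu | hu
    · rw [if_pos hu] at h3 ⊢
      rw [if_pos hu] at h2
      omega
    · rw [if_neg (not_lt.mpr hu)]
      omega
  · -- j is a big variable: just remove it
    refine ⟨0, sm m g, ⟨g, hgk, rfl⟩, ?_⟩
    intro u
    have h3 := hga u
    simp only [Finsupp.add_apply, Finsupp.tsub_apply, Finsupp.single_apply, sm_apply] at h3 ⊢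
    rcases eq_or_ne j u with rfl | hju
    · rw [if_pos rfl, if_neg hjm]
      exact Nat.zero_le _
    · rw [if_neg hju]
      rcases lt_or_ge ((u : ℕ)) m with hu | hu
      · rw [if_pos hu] at h3 ⊢; omega
      · rw [if_neg (not_lt.mpr hu)]; omega

end SPB

open SPB in
/-- If `I` is a monomial ideal of Borel type, then the `k`-th symbolic power `I^(k)`
is a monomial ideal of Borel type. -/
theorem symbolicPower_borelType {K : Type*} [Field K] {n : ℕ}
    (I : Ideal (MvPolynomial (Fin n) K)) (hmon : IsMonomialIdeal I)
    (hBT : IsBorelType I) (k : ℕ) (hk : 1 ≤ k) :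
    IsMonomialIdeal (symbolicPower I k) ∧ IsBorelType (symbolicPower I k) := by
  classical
  by_cases hT : I = ⊤
  · subst hT
    haveI hempty : IsEmpty ((⊤ : Ideal (MvPolynomial (Fin n) K)).minimalPrimes) := by
      constructor
      rintro ⟨P, hP⟩
      exact hP.1.1.ne_top (top_le_iff.mp hP.1.2)
    have hsp : symbolicPower (⊤ : Ideal (MvPolynomial (Fin n) K)) k = ⊤ := by
      rw [symbolicPower]; exact iInf_of_empty _
    rw [hsp]
    constructor
    · exact ⟨{0}, (msp_zero (K := K) (n := n)).symm⟩
    · intro a _ i j _ s _ _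
      exact ⟨0, Submodule.mem_top⟩
  · obtain ⟨G, hG⟩ := hmon
    have hI : I = msp K G := hG
    subst hI
    have hBG : BorelG G := isBorelType_msp.mp hBT
    have hne : (1 : MvPolynomial (Fin n) K) ∉ msp K G := Ideal.ne_top_iff_one _ |>.mp hT
    have hex : ∃ m, msp K G ≤ Pm K n m := ⟨n, msp_le_Pm_top hne⟩
    set m := Nat.find hex with hmdef
    have hm : msp K G ≤ Pm K n m := Nat.find_spec hex
    -- every variable below m has a power lying in I
    have hrad : ∀ i : Fin n, (i : ℕ) < m → ∃ t, 1 ≤ t ∧ ∃ g ∈ G, g ≤ Finsupp.single i t := by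
      intro i him
      have hnle : ¬ msp K G ≤ Pm K n (i : ℕ) := Nat.find_min hex him
      obtain ⟨p, hpI, hpP⟩ := SetLike.not_le_iff_exists.mp hnle
      obtain ⟨a, ha, halow⟩ := not_mem_Pm.mp hpP
      obtain ⟨g0, hg0, hg0a⟩ := mem_msp.mp hpI a ha
      obtain ⟨t, g, hg, hle⟩ := pushdown_aux hBG i _ a (le_refl _) ⟨g0, hg0, hg0a⟩
        (fun l hl => halow l hl)
      refine ⟨max t 1, le_max_right _ _, g, hg, le_trans hle ?_⟩
      intro u
      simp only [Finsupp.single_apply]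
      split
      · exact le_max_left _ _
      · exact le_refl _
    -- Pm is contained in every prime over I
    have hPmle : ∀ Q : Ideal (MvPolynomial (Fin n) K), Q.IsPrime → msp K G ≤ Q →
        Pm K n m ≤ Q := by
      intro Q hQ hIQ
      rw [Pm, msp, Ideal.span_le]
      rintro _ ⟨b, ⟨i, him, rfl⟩, rfl⟩
      obtain ⟨t, ht1, g, hg, hle⟩ := hrad i him
      have hX : (X i : MvPolynomial (Fin n) K) ^ t ∈ Q := by
        rw [MvPolynomial.X_pow_eq_monomial]
        exact hIQ (mono_mem_msp.mpr ⟨g, hg, hle⟩)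
      have hXi : (X i : MvPolynomial (Fin n) K) ∈ Q := hQ.mem_of_pow_mem t hX
      show (monomial (Finsupp.single i 1) (1 : K)) ∈ Q
      rwa [← MvPolynomial.X_pow_eq_monomial, pow_one]
    have hPmem : Pm K n m ∈ (msp K G).minimalPrimes :=
      ⟨⟨Pm_prime m, hm⟩, fun {Q} hQ _ => hPmle Q hQ.1 hQ.2⟩
    have huniq : ∀ P ∈ (msp K G).minimalPrimes, P = Pm K n m := by
      intro P hP
      have h1 : Pm K n m ≤ P := hPmle P hP.1.1 hP.1.2
      exact le_antisymm (hP.2 ⟨Pm_prime m, hm⟩ h1) h1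
    -- the symbolic power is the ideal of small parts of the k-th power
    set Gk := kSum G k with hGkdef
    set G' := (sm (n := n) m) '' Gk with hG'def
    have hG'small : ∀ g ∈ G', ∀ i : Fin n, m ≤ (i : ℕ) → g i = 0 := by
      rintro _ ⟨g, hg, rfl⟩ i hi
      exact sm_big m g i hi
    have hIk : (msp K G) ^ k = msp K Gk := msp_pow G k
    have hk1 : kerLoc ((msp K G) ^ k) (Pm K n m) (Pm_prime m) = msp K G' := by
      apply le_antisymm
      · rintro r ⟨s, hsP, hrs⟩
        by_contra hr
        have hsub : (msp K G) ^ k ≤ msp K G' := by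
          rw [hIk]
          intro p hp
          rw [mem_msp] at hp ⊢
          intro a ha
          obtain ⟨g, hgk, hga⟩ := hp a ha
          exact ⟨sm m g, ⟨g, hgk, rfl⟩, le_trans (sm_le m g) hga⟩
        exact sat_core hG'small hr hsP (hsub hrs)
      · rw [msp, Ideal.span_le]
        rintro _ ⟨_, ⟨g, hgk, rfl⟩, rfl⟩
        refine ⟨monomial (g - sm m g) 1, ?_, ?_⟩
        · rw [not_mem_Pm]
          refine ⟨g - sm m g, ?_, fun i hi => ?_⟩
          · simp [MvPolynomial.support_monomial]
          · simp only [Finsupp.tsub_apply, sm_apply, if_pos hi]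
            omega
        · show (monomial (sm m g) (1 : K)) * monomial (g - sm m g) 1 ∈ (msp K G) ^ k
          rw [MvPolynomial.monomial_mul, one_mul, hIk]
          have hsum : sm m g + (g - sm m g) = g := by
            ext i
            simp only [Finsupp.add_apply, Finsupp.tsub_apply, sm_apply]
            split <;> omega
          rw [hsum]
          exact mono_mem_msp.mpr ⟨g, hgk, le_refl _⟩
    have hSP : symbolicPower (msp K G) k = msp K G' := by
      rw [symbolicPower]
      apply le_antisymm
      · exact le_trans (iInf_le _ (⟨Pm K n m, hPmem⟩ : (msp K G).minimalPrimes))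
          (le_of_eq hk1)
      · apply le_iInf
        rintro ⟨P, hP⟩
        obtain rfl : P = Pm K n m := huniq P hP
        exact le_of_eq hk1.symm
    have hBG' : BorelG G' := BorelG_sm (BorelG_kSum hBG k)
    constructor
    · exact ⟨G', hSP⟩
    · rw [hSP]
      exact isBorelType_msp.mpr hBG'
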